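/- Let M = ℕ₀ \ {1} (the additive monoid of nonnegative integers except 1) and let N = {(0,0)} ∪ (ℤ × ℕ), an additive submonoid of ℤ². Then the direct product monoid M × N is atomic and is a PLS monoid (the atom (2,(0,0)) is purely long and the atom (3,(0,0)) is purely short), but M × N is not a finite factorization monoid: the infinitely many atoms (0,(n,1)), n ∈ ℤ, all divide the element (0,(0,2)) in M × N. -/
import Mathlib


section Defs

variable {M : Type*} [AddCommMonoid M]

/-- `a` is an atom (irreducible element) of the additive monoid `M`. -/
def IsAddAtom (a : M) : Prop :=
  ¬IsAddUnit a ∧ ∀ x y : M, a = x + y → IsAddUnit x ∨ IsAddUnit y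

/-- `a` divides `x` in the additive monoid `M`. -/
def AddDvd (a x : M) : Prop := ∃ c : M, x = a + c

/-- `a` is a prime element of the additive monoid `M`. -/
def IsAddPrime (a : M) : Prop :=
  ¬IsAddUnit a ∧ ∀ x y : M, AddDvd a (x + y) → AddDvd a x ∨ AddDvd a y

/-- `z` is a factorization of `x`: a multiset of atoms whose sum is `x`. -/
def IsFactorizationOf (z : Multiset M) (x : M) : Prop :=
  (∀ a ∈ z, IsAddAtom a) ∧ z.sum = x

/-- `M` is atomic: every non-invertible element is a sum of atoms. -/
def IsAddAtomic (M : Type*) [AddCommMonoid M] : Prop :=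
  ∀ x : M, ¬IsAddUnit x → ∃ z : Multiset M, IsFactorizationOf z x

/-- `M` is a finite factorization monoid: it is atomic and every element has only
finitely many factorizations. -/
def IsFFM (M : Type*) [AddCommMonoid M] : Prop :=
  IsAddAtomic M ∧ ∀ x : M, {z : Multiset M | IsFactorizationOf z x}.Finite

/-- A pair of factorizations is irredundant if no atom appears in both. -/
def Irredundant (z₁ z₂ : Multiset M) : Prop := ∀ a ∈ z₁, a ∉ z₂

/-- `a` is a purely long atom of `M`. -/
def IsPurelyLong (a : M) : Prop :=
  IsAddAtom a ∧ ¬IsAddPrime a ∧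
    ∀ (x : M) (z₁ z₂ : Multiset M), IsFactorizationOf z₁ x → IsFactorizationOf z₂ x →
      Irredundant z₁ z₂ → a ∈ z₁ → Multiset.card z₂ < Multiset.card z₁

/-- `a` is a purely short atom of `M`. -/
def IsPurelyShort (a : M) : Prop :=
  IsAddAtom a ∧ ¬IsAddPrime a ∧
    ∀ (x : M) (z₁ z₂ : Multiset M), IsFactorizationOf z₁ x → IsFactorizationOf z₂ x →
      Irredundant z₁ z₂ → a ∈ z₁ → Multiset.card z₁ < Multiset.card z₂

end Defs

/-- The additive monoid `M = ℕ₀ \ {1}`, as a submonoid of `ℕ`. -/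
def Mnum : AddSubmonoid ℕ where
  carrier := {k : ℕ | k ≠ 1}
  zero_mem' := by simp
  add_mem' := by
    intro a b ha hb
    simp only [Set.mem_setOf_eq] at *
    omega

/-- The additive monoid `N = {(0,0)} ∪ (ℤ × ℕ)`, as a submonoid of `ℤ²`. -/
def Nsub : AddSubmonoid (ℤ × ℤ) where
  carrier := {p : ℤ × ℤ | p = 0 ∨ 0 < p.2}
  zero_mem' := Or.inl rfl
  add_mem' := by
    rintro p q (rfl | hp) hq
    · simpa using hq
    · rcases hq with rfl | hq
      · exact Or.inr (by simpa using hp)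
      · exact Or.inr (by simpa using add_pos hp hq)

/-- The direct product monoid `M × N` of Example 3.4. -/
abbrev MN : Type := ↥Mnum × ↥Nsub

/-- The atom `(2, (0,0))` of `M × N`. -/
def aTwo : MN := (⟨2, show (2:ℕ) ≠ 1 by decide⟩, 0)

/-- The atom `(3, (0,0))` of `M × N`. -/
def aThree : MN := (⟨3, show (3:ℕ) ≠ 1 by decide⟩, 0)

/-- The atom `(0, (n,1))` of `M × N`, for `n : ℤ`. -/
def en1 (n : ℤ) : MN := (0, ⟨(n, 1), Or.inr one_pos⟩)

/-- The element `(0, (0,2))` of `M × N`. -/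
def x02 : MN := (0, ⟨(0, 2), Or.inr (by norm_num)⟩)

section Aux
open Multiset

lemma MN_eq_iff {x y : MN} : x = y ↔ (x.1 : ℕ) = (y.1 : ℕ) ∧ (x.2 : ℤ × ℤ) = (y.2 : ℤ × ℤ) := by
  constructor
  · rintro rfl; exact ⟨rfl, rfl⟩
  · rintro ⟨h1, h2⟩
    exact Prod.ext (Subtype.ext h1) (Subtype.ext h2)

@[simp] lemma MN_add_fst (x y : MN) : ((x + y).1 : ℕ) = (x.1 : ℕ) + (y.1 : ℕ) := rfl
@[simp] lemma MN_add_snd (x y : MN) : ((x + y).2 : ℤ × ℤ) = (x.2 : ℤ × ℤ) + (y.2 : ℤ × ℤ) := rfl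
@[simp] lemma MN_zero_fst : (((0 : MN)).1 : ℕ) = 0 := rfl
@[simp] lemma MN_zero_snd : (((0 : MN)).2 : ℤ × ℤ) = 0 := rfl

lemma Nsub_snd_nonneg (p : ↥Nsub) : 0 ≤ (p : ℤ × ℤ).2 := by
  rcases p.2 with h | h
  · rw [h]; simp
  · exact le_of_lt h

lemma Nsub_eq_zero {p : ↥Nsub} (h : (p : ℤ × ℤ).2 = 0) : (p : ℤ × ℤ) = 0 := by
  rcases p.2 with h' | h'
  · exact h'
  · omega

lemma unit_iff {x : MN} : IsAddUnit x ↔ x = 0 := by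
  constructor
  · intro h
    obtain ⟨y, hy⟩ := isAddUnit_iff_exists_neg.mp h
    have h1 : (x.1 : ℕ) + (y.1 : ℕ) = 0 := by
      have := congrArg (fun z : MN => (z.1 : ℕ)) hy; simpa using this
    have h2 : (x.2 : ℤ × ℤ).2 + (y.2 : ℤ × ℤ).2 = 0 := by
      have := congrArg (fun z : MN => (z.2 : ℤ × ℤ).2) hy; simpa using this
    have hx2 := Nsub_snd_nonneg x.2
    have hy2 := Nsub_snd_nonneg y.2
    rw [MN_eq_iff, MN_zero_fst, MN_zero_snd]
    refine ⟨by omega, Nsub_eq_zero (by omega)⟩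
  · rintro rfl; exact isAddUnit_zero

end Aux
section Aux2
open Multiset

lemma Mnum_ne_one (x : ↥Mnum) : (x : ℕ) ≠ 1 := x.2

lemma second_zero {x y : MN} (h : (x.2 : ℤ × ℤ) + (y.2 : ℤ × ℤ) = 0) :
    (x.2 : ℤ × ℤ) = 0 ∧ (y.2 : ℤ × ℤ) = 0 := by
  have h2 : (x.2 : ℤ × ℤ).2 + (y.2 : ℤ × ℤ).2 = 0 := by
    have := congrArg Prod.snd h; simpa using this
  have hx2 := Nsub_snd_nonneg x.2
  have hy2 := Nsub_snd_nonneg y.2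
  exact ⟨Nsub_eq_zero (by omega), Nsub_eq_zero (by omega)⟩

lemma isAtom_aTwo : IsAddAtom aTwo := by
  constructor
  · rw [unit_iff]
    intro h
    have := congrArg (fun z : MN => (z.1 : ℕ)) h
    simpa [aTwo] using this
  · intro x y h
    have h1 : (2 : ℕ) = (x.1 : ℕ) + (y.1 : ℕ) := by
      have := congrArg (fun z : MN => (z.1 : ℕ)) h; simpa [aTwo] using this
    have h2 : (x.2 : ℤ × ℤ) + (y.2 : ℤ × ℤ) = 0 := by
      have := congrArg (fun z : MN => (z.2 : ℤ × ℤ)) h; simp [aTwo] at this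
      exact this.symm
    obtain ⟨hx2, hy2⟩ := second_zero h2
    have hx1 := Mnum_ne_one x.1
    have hy1 := Mnum_ne_one y.1
    rw [unit_iff, unit_iff, MN_eq_iff, MN_eq_iff, MN_zero_fst, MN_zero_snd]
    have : (x.1 : ℕ) = 0 ∨ (y.1 : ℕ) = 0 := by omega
    rcases this with h' | h'
    · exact Or.inl ⟨h', hx2⟩
    · exact Or.inr ⟨h', hy2⟩

lemma isAtom_aThree : IsAddAtom aThree := by
  constructor
  · rw [unit_iff]
    intro h
    have := congrArg (fun z : MN => (z.1 : ℕ)) h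
    simpa [aThree] using this
  · intro x y h
    have h1 : (3 : ℕ) = (x.1 : ℕ) + (y.1 : ℕ) := by
      have := congrArg (fun z : MN => (z.1 : ℕ)) h; simpa [aThree] using this
    have h2 : (x.2 : ℤ × ℤ) + (y.2 : ℤ × ℤ) = 0 := by
      have := congrArg (fun z : MN => (z.2 : ℤ × ℤ)) h; simp [aThree] at this
      exact this.symm
    obtain ⟨hx2, hy2⟩ := second_zero h2
    have hx1 := Mnum_ne_one x.1
    have hy1 := Mnum_ne_one y.1
    rw [unit_iff, unit_iff, MN_eq_iff, MN_eq_iff, MN_zero_fst, MN_zero_snd]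
    have : (x.1 : ℕ) = 0 ∨ (y.1 : ℕ) = 0 := by omega
    rcases this with h' | h'
    · exact Or.inl ⟨h', hx2⟩
    · exact Or.inr ⟨h', hy2⟩

lemma isAtom_en1 (n : ℤ) : IsAddAtom (en1 n) := by
  constructor
  · rw [unit_iff]
    intro h
    have := congrArg (fun z : MN => (z.2 : ℤ × ℤ).2) h
    simpa [en1] using this
  · intro x y h
    have h1 : (0 : ℕ) = (x.1 : ℕ) + (y.1 : ℕ) := by
      have := congrArg (fun z : MN => (z.1 : ℕ)) h; simpa [en1] using this
    have h2 : (1 : ℤ) = (x.2 : ℤ × ℤ).2 + (y.2 : ℤ × ℤ).2 := by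
      have := congrArg (fun z : MN => (z.2 : ℤ × ℤ).2) h; simpa [en1] using this
    have hx2 := Nsub_snd_nonneg x.2
    have hy2 := Nsub_snd_nonneg y.2
    rw [unit_iff, unit_iff, MN_eq_iff, MN_eq_iff, MN_zero_fst, MN_zero_snd]
    have : (x.2 : ℤ × ℤ).2 = 0 ∨ (y.2 : ℤ × ℤ).2 = 0 := by omega
    rcases this with h' | h'
    · exact Or.inl ⟨by omega, Nsub_eq_zero h'⟩
    · exact Or.inr ⟨by omega, Nsub_eq_zero h'⟩

end Aux2
section Aux3
open Multiset

lemma Nsub_mem (p : ↥Nsub) : (p : ℤ × ℤ) = 0 ∨ 0 < (p : ℤ × ℤ).2 := p.2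

lemma atom_cases {a : MN} (h : IsAddAtom a) :
    a = aTwo ∨ a = aThree ∨ ∃ n : ℤ, a = en1 n := by
  obtain ⟨hu, hs⟩ := h
  rw [unit_iff] at hu
  have hm := Mnum_ne_one a.1
  rcases Nsub_mem a.2 with h0 | hv
  · -- second component is zero; a = (m, 0) with m ≠ 0, m ≠ 1
    have hm0 : (a.1 : ℕ) ≠ 0 := by
      intro hz
      exact hu (MN_eq_iff.mpr ⟨by simpa using hz, by simpa using h0⟩)
    rcases Nat.lt_or_ge (a.1 : ℕ) 4 with h4 | h4
    · have : (a.1 : ℕ) = 2 ∨ (a.1 : ℕ) = 3 := by omega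
      rcases this with h' | h'
      · exact Or.inl (MN_eq_iff.mpr ⟨by simpa [aTwo] using h', by simpa [aTwo] using h0⟩)
      · exact Or.inr (Or.inl (MN_eq_iff.mpr ⟨by simpa [aThree] using h', by simpa [aThree] using h0⟩))
    · exfalso
      have hmem : ((a.1 : ℕ) - 2) ∈ Mnum := by
        show (a.1 : ℕ) - 2 ≠ 1; omega
      have hsplit : a = aTwo + ((⟨(a.1 : ℕ) - 2, hmem⟩ : ↥Mnum), (0 : ↥Nsub)) := by
        rw [MN_eq_iff]
        constructor
        · simp [aTwo]; omega
        · simp [aTwo, h0]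
      rcases hs _ _ hsplit with hun | hun <;> rw [unit_iff] at hun
      · have := congrArg (fun z : MN => (z.1 : ℕ)) hun
        simp [aTwo] at this
      · have := congrArg (fun z : MN => (z.1 : ℕ)) hun
        simp at this; omega
  · -- second component (u, v) with v > 0
    rcases Nat.lt_or_ge 1 ((a.2 : ℤ × ℤ).2).toNat with h2 | h2
    · -- v ≥ 2 : split off (0,(0,1))
      exfalso
      have hmem : ((a.2 : ℤ × ℤ).1, (a.2 : ℤ × ℤ).2 - 1) ∈ Nsub := Or.inr (by simp; omega)
      have hsplit : a = (a.1, (⟨_, hmem⟩ : ↥Nsub)) + ((0 : ↥Mnum), (⟨(0,1), Or.inr one_pos⟩ : ↥Nsub)) := by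
        rw [MN_eq_iff]
        constructor
        · simp
        · simp [Prod.ext_iff]
      rcases hs _ _ hsplit with hun | hun <;> rw [unit_iff] at hun
      · have := congrArg (fun z : MN => (z.2 : ℤ × ℤ).2) hun
        simp at this; omega
      · have := congrArg (fun z : MN => (z.2 : ℤ × ℤ).2) hun
        simp at this
    · -- v = 1
      have hv1 : (a.2 : ℤ × ℤ).2 = 1 := by omega
      by_cases hm0 : (a.1 : ℕ) = 0
      · refine Or.inr (Or.inr ⟨(a.2 : ℤ × ℤ).1, ?_⟩)
        rw [MN_eq_iff]
        refine ⟨by simpa [en1] using hm0, ?_⟩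
        simp [en1, Prod.ext_iff, hv1]
      · exfalso
        have hsplit : a = (a.1, (0 : ↥Nsub)) + ((0 : ↥Mnum), (⟨((a.2 : ℤ × ℤ).1, 1), Or.inr one_pos⟩ : ↥Nsub)) := by
          rw [MN_eq_iff]
          constructor
          · simp
          · simp [Prod.ext_iff, hv1]
        rcases hs _ _ hsplit with hun | hun <;> rw [unit_iff] at hun
        · exact hm0 (by simpa using congrArg (fun z : MN => (z.1 : ℕ)) hun)
        · have := congrArg (fun z : MN => (z.2 : ℤ × ℤ).2) hun
          simp at this

end Aux3
section Aux4
open Multiset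

lemma two_three (m : ℕ) (hm : m ≠ 1) : ∃ p q : ℕ, m = 2 * p + 3 * q :=
  ⟨(m - 3 * (m % 2)) / 2, m % 2, by omega⟩

lemma atomic : IsAddAtomic MN := by
  intro x hx
  rw [unit_iff] at hx
  obtain ⟨p, q, hpq⟩ := two_three (x.1 : ℕ) (Mnum_ne_one x.1)
  rcases Nsub_mem x.2 with h0 | hv
  · refine ⟨replicate p aTwo + replicate q aThree, ?_, ?_⟩
    · intro a ha
      rcases mem_add.mp ha with h | h <;> rw [eq_of_mem_replicate h]
      · exact isAtom_aTwo
      · exact isAtom_aThree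
    · rw [MN_eq_iff]
      constructor
      · simp [sum_replicate, aTwo, aThree]; omega
      · simp [sum_replicate, aTwo, aThree, h0]
  · refine ⟨replicate p aTwo + replicate q aThree +
      (en1 (x.2 : ℤ × ℤ).1 ::ₘ replicate (((x.2 : ℤ × ℤ).2).toNat - 1) (en1 0)), ?_, ?_⟩
    · intro a ha
      rcases mem_add.mp ha with h | h
      · rcases mem_add.mp h with h' | h' <;> rw [eq_of_mem_replicate h']
        · exact isAtom_aTwo
        · exact isAtom_aThree
      · rcases mem_cons.mp h with h' | h'
        · rw [h']; exact isAtom_en1 _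
        · rw [eq_of_mem_replicate h']; exact isAtom_en1 _
    · rw [MN_eq_iff]
      constructor
      · simp [sum_replicate, aTwo, aThree, en1]; omega
      · simp [sum_replicate, aTwo, aThree, en1, Prod.ext_iff]
        omega

end Aux4
section Aux5
open Multiset

lemma two_ne_three : aTwo ≠ aThree := by
  intro h
  have := congrArg (fun z : MN => (z.1 : ℕ)) h
  simp [aTwo, aThree] at this

lemma en1_ne_two (n : ℤ) : en1 n ≠ aTwo := by
  intro h
  have := congrArg (fun z : MN => (z.1 : ℕ)) h
  simp [en1, aTwo] at this

lemma en1_ne_three (n : ℤ) : en1 n ≠ aThree := by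
  intro h
  have := congrArg (fun z : MN => (z.1 : ℕ)) h
  simp [en1, aThree] at this

noncomputable instance : DecidableEq MN := Classical.decEq _

@[simp] lemma aTwo_fst : ((aTwo.1 : ℕ)) = 2 := rfl
@[simp] lemma aTwo_snd : ((aTwo.2 : ℤ × ℤ)) = 0 := rfl
@[simp] lemma aThree_fst : ((aThree.1 : ℕ)) = 3 := rfl
@[simp] lemma aThree_snd : ((aThree.2 : ℤ × ℤ)) = 0 := rfl
@[simp] lemma en1_fst (n : ℤ) : (((en1 n).1 : ℕ)) = 0 := rfl
@[simp] lemma en1_snd (n : ℤ) : (((en1 n).2 : ℤ × ℤ)) = (n, 1) := rfl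

lemma count_lemma (z : Multiset MN) (hz : ∀ a ∈ z, IsAddAtom a) :
    ((z.sum.1 : ℕ) = 2 * z.count aTwo + 3 * z.count aThree) ∧
    ((z.sum.2 : ℤ × ℤ).2 = (Multiset.card z : ℤ) - z.count aTwo - z.count aThree) := by
  induction z using Multiset.induction with
  | empty => simp
  | cons a z ih =>
    have ha := hz a (mem_cons_self a z)
    obtain ⟨ih1, ih2⟩ := ih (fun b hb => hz b (mem_cons_of_mem hb))
    rcases atom_cases ha with rfl | rfl | ⟨n, rfl⟩
    · simp only [count_cons, sum_cons, Prod.fst_add, Prod.snd_add, AddSubmonoid.coe_add, aTwo_fst, aTwo_snd, card_cons,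
        ih1, ih2, Prod.snd_add, Prod.snd_zero, if_pos rfl, if_neg two_ne_three.symm, if_true]
      push_cast; constructor <;> ring
    · simp only [count_cons, sum_cons, Prod.fst_add, Prod.snd_add, AddSubmonoid.coe_add, aThree_fst, aThree_snd, card_cons,
        ih1, ih2, Prod.snd_add, Prod.snd_zero, if_pos rfl, if_neg two_ne_three, if_true]
      push_cast; constructor <;> ring
    · simp only [count_cons, sum_cons, Prod.fst_add, Prod.snd_add, AddSubmonoid.coe_add, en1_fst, en1_snd, card_cons,
        ih1, ih2, Prod.snd_add, if_neg (en1_ne_two n).symm, if_neg (en1_ne_three n).symm]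
      push_cast; constructor <;> ring

end Aux5
section Aux6
open Multiset

lemma not_dvd_of_fst {a x : MN} (h : ¬ ((x.1 : ℕ) - (a.1 : ℕ) ≠ 1 ∨ (x.1 : ℕ) < (a.1 : ℕ)) → False)
    : True := trivial

lemma purelyLong : IsPurelyLong aTwo := by
  refine ⟨isAtom_aTwo, ?_, ?_⟩
  · rintro ⟨-, hp⟩
    have hdvd : AddDvd aTwo (aThree + aThree) := by
      refine ⟨((⟨4, show (4:ℕ) ≠ 1 by decide⟩ : ↥Mnum), (0 : ↥Nsub)), ?_⟩
      rw [MN_eq_iff]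
      constructor <;> simp
    rcases hp aThree aThree hdvd with ⟨c, hc⟩ | ⟨c, hc⟩ <;>
    · have h1 := congrArg (fun z : MN => (z.1 : ℕ)) hc
      simp at h1
      exact Mnum_ne_one c.1 (by omega)
  · intro x z1 z2 h1 h2 hirr hmem
    obtain ⟨hz1a, hz1s⟩ := h1
    obtain ⟨hz2a, hz2s⟩ := h2
    obtain ⟨e11, e12⟩ := count_lemma z1 hz1a
    obtain ⟨e21, e22⟩ := count_lemma z2 hz2a
    rw [hz1s] at e11 e12
    rw [hz2s] at e21 e22
    have hc2 : count aTwo z2 = 0 := count_eq_zero.mpr (hirr aTwo hmem)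
    have hc1 : 0 < count aTwo z1 := count_pos.mpr hmem
    omega

lemma purelyShort : IsPurelyShort aThree := by
  refine ⟨isAtom_aThree, ?_, ?_⟩
  · rintro ⟨-, hp⟩
    have hfour : ((4 : ℕ)) ∈ Mnum := show (4:ℕ) ≠ 1 by decide
    have hdvd : AddDvd aThree (((⟨4, hfour⟩ : ↥Mnum), (0 : ↥Nsub)) + ((⟨4, hfour⟩ : ↥Mnum), (0 : ↥Nsub))) := by
      refine ⟨((⟨5, show (5:ℕ) ≠ 1 by decide⟩ : ↥Mnum), (0 : ↥Nsub)), ?_⟩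
      rw [MN_eq_iff]
      constructor <;> simp
    rcases hp _ _ hdvd with ⟨c, hc⟩ | ⟨c, hc⟩ <;>
    · have h1 := congrArg (fun z : MN => (z.1 : ℕ)) hc
      simp at h1
      exact Mnum_ne_one c.1 (by omega)
  · intro x z1 z2 h1 h2 hirr hmem
    obtain ⟨hz1a, hz1s⟩ := h1
    obtain ⟨hz2a, hz2s⟩ := h2
    obtain ⟨e11, e12⟩ := count_lemma z1 hz1a
    obtain ⟨e21, e22⟩ := count_lemma z2 hz2a
    rw [hz1s] at e11 e12
    rw [hz2s] at e21 e22
    have hc2 : count aThree z2 = 0 := count_eq_zero.mpr (hirr aThree hmem)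
    have hc1 : 0 < count aThree z1 := count_pos.mpr hmem
    omega

lemma en1_inj : Function.Injective en1 := by
  intro a b h
  have := congrArg (fun z : MN => (z.2 : ℤ × ℤ).1) h
  simpa [en1] using this

lemma en1_add (n : ℤ) : en1 n + en1 (-n) = x02 := by
  rw [MN_eq_iff]
  constructor
  · simp [en1, x02]
  · simp [en1, x02, Prod.ext_iff]

lemma not_ffm : ¬ IsFFM MN := by
  rintro ⟨-, hfin⟩
  have hinf : {z : Multiset MN | IsFactorizationOf z x02}.Infinite := by
    refine Set.infinite_of_injective_forall_mem
      (f := fun n : ℕ => en1 (n : ℤ) ::ₘ {en1 (-(n : ℤ))}) ?_ ?_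
    · intro a b hab
      simp only at hab
      have hmem : en1 (a : ℤ) ∈ (en1 (b : ℤ) ::ₘ {en1 (-(b : ℤ))}) := by
        rw [← hab]; exact mem_cons_self _ _
      rcases mem_cons.mp hmem with h' | h'
      · exact Nat.cast_injective (en1_inj h')
      · have := en1_inj (mem_singleton.mp h')
        omega
    · intro n
      refine ⟨?_, ?_⟩
      · intro a ha
        rcases mem_cons.mp ha with h' | h'
        · rw [h']; exact isAtom_en1 _
        · rw [mem_singleton.mp h']; exact isAtom_en1 _
      · show (en1 (n : ℤ) ::ₘ {en1 (-(n : ℤ))}).sum = x02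
        rw [sum_cons, sum_singleton]
        exact en1_add _
  exact hinf (hfin x02)

end Aux6
/-- For `M = ℕ₀ \ {1}` and `N = {(0,0)} ∪ (ℤ × ℕ) ⊆ ℤ²`, the monoid `M × N` is
atomic and is a PLS monoid (`(2,(0,0))` is purely long and `(3,(0,0))` is purely
short), but it is not a finite factorization monoid: the infinitely many pairwise
distinct atoms `(0,(n,1))`, `n ∈ ℤ`, all divide the element `(0,(0,2))`. -/
theorem example_plsm_not_ffm :
    IsAddAtomic MN ∧
    IsPurelyLong aTwo ∧
    IsPurelyShort aThree ∧
    (∀ n : ℤ, IsAddAtom (en1 n) ∧ AddDvd (en1 n) x02) ∧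
    Function.Injective en1 ∧
    ¬IsFFM MN := by
  exact ⟨atomic, purelyLong, purelyShort,
    fun n => ⟨isAtom_en1 n, ⟨en1 (-n), (en1_add n).symm⟩⟩, en1_inj, not_ffm⟩
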